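/- Let C be a category with W satisfying CF1–CF3. Every double cell of C{W} can be written as a (finite) pasting of companion binding cells (cells ψ_{u,w} and χ_{u,w} associated to companion pairs of the form u : (wu) → (w)), their vertical inverses, and horizontal and vertical identity cells. -/
import Mathlib


/-!
STATEMENT 19: Every double cell of `C{W}` can be written as a (finite)
pasting of the companion binding cells `ψ_{u,w}`, `χ_{u,w}` (associated with
the companion pairs of the form `u : (w ∘ u) → (w)`), their vertical
inverses, and horizontal and vertical identity cells.

Since the vertical cell category of `C{W}` is a posetal groupoid, there is at
most one double cell in any given frame, and the vertical boundaries of a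
frame are determined by its corners; so a pasting decomposition of a double
cell is precisely a decomposition of its frame by the inductively generated
class `GenFrame` below.
-/

open CategoryTheory

universe v u

variable {C : Type u} [Category.{v} C]

/-- The Gabriel–Zisman (right) calculus of fractions conditions CF1–CF3. -/
structure FractionsCalculus (W : MorphismProperty C) : Prop where
  isos : ∀ {X Y : C} (f : X ⟶ Y), IsIso f → W f
  comp : ∀ {X Y Z : C} (f : X ⟶ Y) (g : Y ⟶ Z), W f → W g → W (f ≫ g)
  ore : ∀ {X A B : C} (f : X ⟶ B) (w : A ⟶ B), W w →
    ∃ (D : C) (fbar : D ⟶ A) (wbar : D ⟶ X), W wbar ∧ fbar ≫ w = wbar ≫ f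
  cancel : ∀ {A B X : C} (f g : A ⟶ B) (w : B ⟶ X), W w → f ≫ w = g ≫ w →
    ∃ (Y : C) (wt : Y ⟶ A), W wt ∧ wt ≫ f = wt ≫ g

/-- Two connecting spans `(p₁, p₂)` and `(q₁, q₂)` between `w₁ : A₁ ⟶ B` and
`w₂ : A₂ ⟶ B` represent the same vertical arrow of `C{W}`. -/
def SpanEquivRaw (W : MorphismProperty C) {A₁ A₂ B : C}
    (w₁ : A₁ ⟶ B) (w₂ : A₂ ⟶ B) {P Q : C}
    (p₁ : P ⟶ A₁) (p₂ : P ⟶ A₂) (q₁ : Q ⟶ A₁) (q₂ : Q ⟶ A₂) : Prop :=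
  ∃ (E : C) (r : E ⟶ P) (s : E ⟶ Q),
    r ≫ p₁ = s ≫ q₁ ∧ r ≫ p₂ = s ≫ q₂ ∧ W (r ≫ p₁ ≫ w₁)

/-- A representative diagram of a double cell of `C{W}` in the frame given by
objects `(w₁ : A₁ ⟶ B)`, `(w₂ : A₂ ⟶ B)`, `(w₁' : A₁' ⟶ B')`,
`(w₂' : A₂' ⟶ B')` (top-left, bottom-left, top-right and bottom-right),
top horizontal arrow `f₁ : (w₁) → (w₁')` and bottom horizontal arrow
`f₂ : (w₂) → (w₂')`; the left and right vertical boundaries are the classes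
of the connecting spans `(u₁, u₂)` and `(u₁', u₂')`. -/
structure CellDiag (W : MorphismProperty C) {A₁ A₂ B A₁' A₂' B' : C}
    (w₁ : A₁ ⟶ B) (w₂ : A₂ ⟶ B) (w₁' : A₁' ⟶ B') (w₂' : A₂' ⟶ B')
    (f₁ : A₁ ⟶ A₁') (f₂ : A₂ ⟶ A₂') where
  left : C
  right : C
  u₁ : left ⟶ A₁
  u₂ : left ⟶ A₂
  u₁' : right ⟶ A₁'
  u₂' : right ⟶ A₂'
  φ : left ⟶ right
  commL : u₁ ≫ w₁ = u₂ ≫ w₂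
  memL : W (u₁ ≫ w₁)
  commR : u₁' ≫ w₁' = u₂' ≫ w₂'
  memR : W (u₁' ≫ w₁')
  commTop : u₁ ≫ f₁ = φ ≫ u₁'
  commBot : u₂ ≫ f₂ = φ ≫ u₂'

/-- The frames of double cells of `C{W}` generated by the companion binding
cells `ψ_{u,w}`, `χ_{u,w}`, vertical inversion, horizontal and vertical
identity cells, and horizontal and vertical pasting.  A frame is recorded by
its four corner objects `(w₁) (w₂) (w₁') (w₂')` (top-left, bottom-left,
top-right, bottom-right) and its top and bottom horizontal arrows. -/
inductive GenFrame (W : MorphismProperty C) :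
    ∀ {A₁ A₂ B A₁' A₂' B' : C}, (A₁ ⟶ B) → (A₂ ⟶ B) → (A₁' ⟶ B') → (A₂' ⟶ B') →
      (A₁ ⟶ A₁') → (A₂ ⟶ A₂') → Prop
  | psi {X A B : C} (u : X ⟶ A) (w : A ⟶ B) (hw : W w) (hu : W (u ≫ w)) :
      GenFrame W (u ≫ w) (u ≫ w) (u ≫ w) w (𝟙 X) u
  | chi {X A B : C} (u : X ⟶ A) (w : A ⟶ B) (hw : W w) (hu : W (u ≫ w)) :
      GenFrame W (u ≫ w) w w w u (𝟙 A)
  | vflip {A₁ A₂ B A₁' A₂' B' : C} {w₁ : A₁ ⟶ B} {w₂ : A₂ ⟶ B} {w₁' : A₁' ⟶ B'}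
      {w₂' : A₂' ⟶ B'} {f₁ : A₁ ⟶ A₁'} {f₂ : A₂ ⟶ A₂'} :
      GenFrame W w₁ w₂ w₁' w₂' f₁ f₂ → GenFrame W w₂ w₁ w₂' w₁' f₂ f₁
  | hid {A₁ A₂ B : C} (w₁ : A₁ ⟶ B) (w₂ : A₂ ⟶ B) (h₁ : W w₁) (h₂ : W w₂) :
      GenFrame W w₁ w₂ w₁ w₂ (𝟙 A₁) (𝟙 A₂)
  | vid {A₁ A₁' B B' : C} (w₁ : A₁ ⟶ B) (w₁' : A₁' ⟶ B') (h₁ : W w₁) (h₁' : W w₁')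
      (f : A₁ ⟶ A₁') : GenFrame W w₁ w₁ w₁' w₁' f f
  | hcomp {A₁ A₂ B A₁' A₂' B' A₁'' A₂'' B'' : C}
      {w₁ : A₁ ⟶ B} {w₂ : A₂ ⟶ B} {w₁' : A₁' ⟶ B'} {w₂' : A₂' ⟶ B'}
      {w₁'' : A₁'' ⟶ B''} {w₂'' : A₂'' ⟶ B''}
      {f₁ : A₁ ⟶ A₁'} {f₂ : A₂ ⟶ A₂'} {g₁ : A₁' ⟶ A₁''} {g₂ : A₂' ⟶ A₂''} :
      GenFrame W w₁ w₂ w₁' w₂' f₁ f₂ → GenFrame W w₁' w₂' w₁'' w₂'' g₁ g₂ →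
      GenFrame W w₁ w₂ w₁'' w₂'' (f₁ ≫ g₁) (f₂ ≫ g₂)
  | vcomp {A₁ A₂ A₃ B A₁' A₂' A₃' B' : C}
      {w₁ : A₁ ⟶ B} {w₂ : A₂ ⟶ B} {w₃ : A₃ ⟶ B}
      {w₁' : A₁' ⟶ B'} {w₂' : A₂' ⟶ B'} {w₃' : A₃' ⟶ B'}
      {f₁ : A₁ ⟶ A₁'} {f₂ : A₂ ⟶ A₂'} {f₃ : A₃ ⟶ A₃'} :
      GenFrame W w₁ w₂ w₁' w₂' f₁ f₂ → GenFrame W w₂ w₃ w₂' w₃' f₂ f₃ →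
      GenFrame W w₁ w₃ w₁' w₃' f₁ f₃

/-- Auxiliary decomposition: a frame with left corner objects `(u ≫ w), (w)`
and right corner objects `(u' ≫ w'), (w')`, top `φ` and bottom `f`, is a
pasting of `ψ`, `χ` and identity cells. -/
lemma genAux (W : MorphismProperty C) {L A B R A' B' : C}
    (u : L ⟶ A) (w : A ⟶ B) (u' : R ⟶ A') (w' : A' ⟶ B') (φ : L ⟶ R) (f : A ⟶ A')
    (hw : W w) (hv : W (u ≫ w)) (hw' : W w') (hv' : W (u' ≫ w'))
    (hcomm : u ≫ f = φ ≫ u') : GenFrame W (u ≫ w) w (u' ≫ w') w' φ f := by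
  have X := GenFrame.hcomp (GenFrame.vid (u ≫ w) (u' ≫ w') hv hv' φ)
    (GenFrame.psi u' w' hw' hv')
  have Y := GenFrame.hcomp (GenFrame.chi u w hw hv) (GenFrame.vid w w' hw hw' f)
  rw [Category.comp_id] at X
  rw [Category.id_comp, hcomm] at Y
  exact GenFrame.vcomp X Y

theorem statement19 (W : MorphismProperty C) (hW : FractionsCalculus W)
    {A₁ A₂ B A₁' A₂' B' : C}
    (w₁ : A₁ ⟶ B) (w₂ : A₂ ⟶ B) (w₁' : A₁' ⟶ B') (w₂' : A₂' ⟶ B')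
    (hw₁ : W w₁) (hw₂ : W w₂) (hw₁' : W w₁') (hw₂' : W w₂')
    (f₁ : A₁ ⟶ A₁') (f₂ : A₂ ⟶ A₂')
    (hcell : Nonempty (CellDiag W w₁ w₂ w₁' w₂' f₁ f₂)) :
    GenFrame W w₁ w₂ w₁' w₂' f₁ f₂ := by
  obtain ⟨d⟩ := hcell
  have hv : W (d.u₂ ≫ w₂) := by rw [← d.commL]; exact d.memL
  have hv' : W (d.u₂' ≫ w₂') := by rw [← d.commR]; exact d.memR
  have F1 : GenFrame W w₁ (d.u₁ ≫ w₁) w₁' (d.u₁' ≫ w₁') f₁ d.φ :=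
    (genAux W d.u₁ w₁ d.u₁' w₁' d.φ f₁ hw₁ d.memL hw₁' d.memR d.commTop).vflip
  rw [d.commL, d.commR] at F1
  have F2 : GenFrame W (d.u₂ ≫ w₂) w₂ (d.u₂' ≫ w₂') w₂' d.φ f₂ :=
    genAux W d.u₂ w₂ d.u₂' w₂' d.φ f₂ hw₂ hv hw₂' hv' d.commBot
  exact F1.vcomp F2
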